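/- arXiv:1811.07221 — 2 statements merged into one kernel-verified Lean document; each statement's English description precedes it below -/
import Mathlib

section
/- Let k ≥ 1, let d_1, d_2 ≥ 0 and let n_1, n_2 be nonnegative integers. Suppose that for i = 1, 2, every finite simple graph with maximum degree at most d_i and more than n_i vertices has an induced subgraph H with at least k vertices whose degree in H equals the maximum degree of H. Then every finite simple graph with maximum degree at most d_1 + d_2 + 1 and more than n_1 + n_2 vertices has an induced subgraph H with at least k vertices whose degree in H equals the maximum degree of H. (Equivalently, h(k,d_1) + h(k,d_2) ≥ h(k, d_1+d_2+1).) -/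
/-- The degree of a vertex: the number of its neighbors (graph on a finite type). -/
noncomputable def ndeg {V : Type*} (G : SimpleGraph V) (v : V) : ℕ :=
  (G.neighborSet v).ncard

/-- The maximum degree of a graph (on a finite type). -/
noncomputable def maxDeg {V : Type*} (G : SimpleGraph V) : ℕ :=
  sSup (Set.range (ndeg G))

/-- The number of vertices of `G` whose degree equals the maximum degree of `G`. -/
noncomputable def maxRepCount {V : Type*} (G : SimpleGraph V) : ℕ :=
  {v : V | ndeg G v = maxDeg G}.ncard


open Finset

-- iso lemmas
lemma ndeg_iso {V W : Type*} {G : SimpleGraph V} {G' : SimpleGraph W} (f : G ≃g G') (v : V) :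
    ndeg G' (f v) = ndeg G v := by
  unfold ndeg
  rw [← Nat.card_coe_set_eq, ← Nat.card_coe_set_eq]
  exact Nat.card_congr (f.mapNeighborSet v).symm

lemma maxDeg_iso {V W : Type*} {G : SimpleGraph V} {G' : SimpleGraph W} (f : G ≃g G') :
    maxDeg G' = maxDeg G := by
  unfold maxDeg
  congr 1
  ext n
  constructor
  · rintro ⟨w, rfl⟩
    exact ⟨f.symm w, by rw [← ndeg_iso f (f.symm w), RelIso.apply_symm_apply]⟩
  · rintro ⟨v, rfl⟩
    exact ⟨f v, ndeg_iso f v⟩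

lemma maxRepCount_iso {V W : Type*} {G : SimpleGraph V} {G' : SimpleGraph W} (f : G ≃g G') :
    maxRepCount G' = maxRepCount G := by
  unfold maxRepCount
  rw [← Nat.card_coe_set_eq, ← Nat.card_coe_set_eq]
  exact Nat.card_congr (Equiv.subtypeEquiv f.toEquiv (fun v => by
    simp only [Set.mem_setOf_eq]
    rw [show f.toEquiv v = f v from rfl, ndeg_iso f, maxDeg_iso f])).symm

/-- Iso between nested induced subgraphs. -/
noncomputable def induceInduceIso {V : Type*} (G : SimpleGraph V) (A : Set V) (t : Set A) :
    (G.induce A).induce t ≃g G.induce (Subtype.val '' t) where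
  toEquiv := (Equiv.Set.image Subtype.val t Subtype.val_injective).trans (Equiv.setCongr rfl)
  map_rel_iff' := by
    intro a b
    simp only [SimpleGraph.comap_adj, Equiv.coe_trans, Function.comp_apply,
      Equiv.setCongr_apply, Equiv.Set.image_apply]
    rfl

lemma ndeg_induce {V : Type*} [Fintype V] [DecidableEq V] (G : SimpleGraph V)
    [DecidableRel G.Adj] (s : Finset V) (v : (s : Set V)) :
    ndeg (G.induce (s : Set V)) v = (G.neighborFinset v.1 ∩ s).card := by
  unfold ndeg
  rw [← Nat.card_coe_set_eq]
  rw [← Nat.card_eq_finsetCard]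
  refine Nat.card_congr ?_
  refine ⟨fun x => ⟨x.1.1, ?_⟩, fun x => ⟨⟨x.1, ?_⟩, ?_⟩, fun x => rfl, fun x => rfl⟩
  · have h := x.2
    simp only [SimpleGraph.mem_neighborSet, SimpleGraph.comap_adj,
      Function.Embedding.coe_subtype] at h
    have h2 : (x.1 : V) ∈ s := x.1.2
    simp only [Finset.mem_coe, Finset.mem_inter, SimpleGraph.mem_neighborFinset]
    exact ⟨h, h2⟩
  · have h := x.2
    simp only [Finset.mem_coe, Finset.mem_inter, SimpleGraph.mem_neighborFinset] at h
    exact h.2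
  · have h := x.2
    simp only [Finset.mem_coe, Finset.mem_inter, SimpleGraph.mem_neighborFinset] at h
    simp only [SimpleGraph.mem_neighborSet, SimpleGraph.comap_adj,
      Function.Embedding.coe_subtype]
    exact h.1

section Lovasz
variable {V : Type*} [Fintype V] [DecidableEq V] (G : SimpleGraph V) [DecidableRel G.Adj]

/-- degree of `v` into `s`. -/
def degIn (s : Finset V) (v : V) : ℕ := (G.neighborFinset v ∩ s).card

lemma degIn_eq_sum (s : Finset V) (v : V) :
    degIn G s v = ∑ w ∈ s, (if G.Adj v w then 1 else 0) := by
  rw [degIn, show G.neighborFinset v ∩ s = s.filter (fun w => G.Adj v w) by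
    ext w; simp [SimpleGraph.mem_neighborFinset, and_comm], Finset.card_filter]

/-- twice the number of edges inside `s`. -/
def eIn (s : Finset V) : ℕ := ∑ u ∈ s, ∑ w ∈ s, (if G.Adj u w then 1 else 0)

lemma eIn_erase (s : Finset V) (v : V) (hv : v ∈ s) :
    eIn G s = eIn G (s.erase v) + 2 * degIn G s v := by
  unfold eIn
  rw [← Finset.add_sum_erase _ _ hv]
  have h1 : ∀ u ∈ s.erase v, (∑ w ∈ s, if G.Adj u w then 1 else 0)
      = (if G.Adj u v then 1 else 0) + ∑ w ∈ s.erase v, (if G.Adj u w then 1 else 0) := by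
    intro u _
    rw [← Finset.add_sum_erase _ _ hv]
  rw [Finset.sum_congr rfl h1, Finset.sum_add_distrib]
  have h2 : ∑ u ∈ s.erase v, (if G.Adj u v then 1 else 0) = degIn G s v - 1*0 := by
    rw [degIn_eq_sum, ← Finset.add_sum_erase _ _ hv]
    simp only [G.irrefl, if_false, zero_add, mul_zero, Nat.sub_zero]
    refine Finset.sum_congr rfl fun u _ => ?_
    simp [G.adj_comm]
  rw [h2]
  rw [degIn_eq_sum]
  ring_nf
  omega

lemma degIn_add_compl (s : Finset V) (v : V) :
    degIn G s v + degIn G sᶜ v = G.degree v := by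
  unfold degIn
  rw [← Finset.card_union_of_disjoint, ← Finset.inter_union_distrib_left,
    Finset.union_compl, Finset.inter_univ, SimpleGraph.degree]
  · exact Finset.disjoint_of_subset_left Finset.inter_subset_right
      (Finset.disjoint_of_subset_right Finset.inter_subset_right disjoint_compl_right)

lemma lovasz (d₁ d₂ : ℕ) (hdeg : ∀ v, G.degree v ≤ d₁ + d₂ + 1) :
    ∃ s : Finset V, (∀ v ∈ s, degIn G s v ≤ d₁) ∧ (∀ v ∈ sᶜ, degIn G sᶜ v ≤ d₂) := by
  obtain ⟨s, -, hmin⟩ := Finset.exists_min_image (Finset.univ : Finset (Finset V))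
    (fun s => (d₂+1) * eIn G s + (d₁+1) * eIn G sᶜ) ⟨∅, Finset.mem_univ _⟩
  refine ⟨s, fun v hv => ?_, fun v hv => ?_⟩
  · by_contra hc
    push_neg at hc
    have hvc : v ∉ sᶜ := by simp [hv]
    have e1 : eIn G s = eIn G (s.erase v) + 2 * degIn G s v := eIn_erase G s v hv
    have e2 : eIn G (s.erase v)ᶜ = eIn G sᶜ + 2 * degIn G (s.erase v)ᶜ v := by
      have : ((s.erase v)ᶜ).erase v = sᶜ := by
        ext u
        by_cases huv : u = v
        · subst huv; simp [hv]
        · simp [Finset.mem_erase, huv]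
      have hv' : v ∈ (s.erase v)ᶜ := by simp
      rw [eIn_erase G _ v hv', this]
    have hd : degIn G (s.erase v)ᶜ v ≤ d₂ := by
      have h3 : degIn G s v + degIn G sᶜ v ≤ d₁ + d₂ + 1 :=
        (degIn_add_compl G s v) ▸ hdeg v
      have h4 : degIn G (s.erase v)ᶜ v = degIn G sᶜ v := by
        unfold degIn
        congr 1
        ext u
        simp only [Finset.mem_inter, Finset.mem_compl, Finset.mem_erase,
          SimpleGraph.mem_neighborFinset]
        constructor
        · rintro ⟨h, hu⟩; exact ⟨h, fun hus => hu ⟨(G.ne_of_adj h).symm, hus⟩⟩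
        · rintro ⟨h, hu⟩; exact ⟨h, fun ⟨_, hus⟩ => hu hus⟩
      omega
    have := hmin (s.erase v) (Finset.mem_univ _)
    rw [e1] at this
    have key : (d₁+1) * degIn G (s.erase v)ᶜ v < (d₂+1) * degIn G s v := by
      calc (d₁+1) * degIn G (s.erase v)ᶜ v ≤ (d₁+1) * d₂ := by
            exact Nat.mul_le_mul_left _ hd
        _ < (d₁+1) * (d₂+1) := by nlinarith
        _ ≤ (d₂+1) * degIn G s v := by nlinarith
    nlinarith [this, e2]
  · by_contra hc
    push_neg at hc
    have e1 : eIn G sᶜ = eIn G (sᶜ.erase v) + 2 * degIn G sᶜ v := eIn_erase G sᶜ v hv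
    have hvi : v ∉ s := by simpa using hv
    have e2 : eIn G (insert v s) = eIn G s + 2 * degIn G (insert v s) v := by
      have h5 : (insert v s).erase v = s := Finset.erase_insert hvi
      have := eIn_erase G (insert v s) v (Finset.mem_insert_self v s)
      rw [h5] at this
      exact this
    have hcomp : (insert v s)ᶜ = sᶜ.erase v := by
      ext u
      by_cases huv : u = v
      · subst huv; simp
      · simp [Finset.mem_erase, huv]
    have hd : degIn G (insert v s) v ≤ d₁ := by
      have h3 : degIn G s v + degIn G sᶜ v ≤ d₁ + d₂ + 1 :=
        (degIn_add_compl G s v) ▸ hdeg v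
      have h4 : degIn G (insert v s) v = degIn G s v := by
        unfold degIn
        congr 1
        ext u
        simp only [Finset.mem_inter, Finset.mem_insert, SimpleGraph.mem_neighborFinset]
        constructor
        · rintro ⟨h, hu | hu⟩
          · exact absurd (hu ▸ h) (G.irrefl)
          · exact ⟨h, hu⟩
        · rintro ⟨h, hu⟩; exact ⟨h, Or.inr hu⟩
      omega
    have := hmin (insert v s) (Finset.mem_univ _)
    rw [hcomp, e2] at this
    have key : (d₂+1) * degIn G (insert v s) v < (d₁+1) * degIn G sᶜ v := by
      calc (d₂+1) * degIn G (insert v s) v ≤ (d₂+1) * d₁ := Nat.mul_le_mul_left _ hd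
        _ < (d₂+1) * (d₁+1) := by nlinarith
        _ ≤ (d₁+1) * degIn G sᶜ v := by nlinarith
    nlinarith [this, e1]

end Lovasz

lemma ndeg_eq_degree {V : Type*} [Fintype V] (G : SimpleGraph V) [DecidableRel G.Adj] (v : V) :
    ndeg G v = G.degree v := by
  rw [ndeg, ← Nat.card_coe_set_eq, Nat.card_eq_fintype_card,
    G.card_neighborSet_eq_degree]

/-- Subadditivity for `h`: `h(k, d₁) + h(k, d₂) ≥ h(k, d₁ + d₂ + 1)`. -/
theorem stmt_8 (k d₁ d₂ n₁ n₂ : ℕ) (hk : 1 ≤ k)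
    (h₁ : ∀ (V : Type) [Finite V] (G : SimpleGraph V), (∀ v, ndeg G v ≤ d₁) →
      n₁ < Nat.card V → ∃ s : Set V, k ≤ maxRepCount (G.induce s))
    (h₂ : ∀ (V : Type) [Finite V] (G : SimpleGraph V), (∀ v, ndeg G v ≤ d₂) →
      n₂ < Nat.card V → ∃ s : Set V, k ≤ maxRepCount (G.induce s)) :
    ∀ (V : Type) [Finite V] (G : SimpleGraph V), (∀ v, ndeg G v ≤ d₁ + d₂ + 1) →
      n₁ + n₂ < Nat.card V → ∃ s : Set V, k ≤ maxRepCount (G.induce s) := by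
  intro V _ G hdeg hcard
  classical
  have : Fintype V := Fintype.ofFinite V
  have hdeg' : ∀ v, G.degree v ≤ d₁ + d₂ + 1 := fun v => (ndeg_eq_degree G v) ▸ hdeg v
  obtain ⟨s, hs1, hs2⟩ := lovasz G d₁ d₂ hdeg'
  have hcards : n₁ < s.card ∨ n₂ < sᶜ.card := by
    have h1 := Finset.card_compl s (α := V)
    have h2 : s.card ≤ Fintype.card V := Finset.card_le_univ s
    rw [Nat.card_eq_fintype_card] at hcard
    omega
  have keycase : ∀ (u : Finset V) (d n : ℕ), (∀ v ∈ u, degIn G u v ≤ d) → n < u.card →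
      (∀ (W : Type) [Finite W] (H : SimpleGraph W), (∀ v, ndeg H v ≤ d) →
        n < Nat.card W → ∃ t : Set W, k ≤ maxRepCount (H.induce t)) →
      ∃ s : Set V, k ≤ maxRepCount (G.induce s) := by
    intro u d n hu hcardu h
    have hcardA : n < Nat.card ((u : Set V)) := by
      rw [Nat.card_coe_set_eq, Set.ncard_coe_finset]; exact hcardu
    obtain ⟨t, ht⟩ := h ((u : Set V)) (G.induce (u : Set V))
      (fun v => by rw [ndeg_induce G u v]; exact hu v.1 v.2) hcardA
    refine ⟨Subtype.val '' t, ?_⟩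
    rwa [maxRepCount_iso (induceInduceIso G (u : Set V) t)]
  rcases hcards with h | h
  · exact keycase s d₁ n₁ hs1 h h₁
  · exact keycase sᶜ d₂ n₂ hs2 h h₂
end

section
/- For every integer k ≥ 1, every finite simple graph with maximum degree at most 2 and with more than 11(k−1)/5 vertices (i.e., with n vertices where 5n > 11(k−1)) has an induced subgraph that is regular and has at least k vertices. (Equivalently, f(k,2) ≤ 11(k−1)/5.) -/
set_option linter.unusedSectionVars false
set_option linter.unusedVariables false

open Set

section Aux
variable {V : Type} [Finite V] (G : SimpleGraph V)

/-- `S` induces an `r`-regular subgraph of `G`. -/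
def RegS (r : ℕ) (S : Set V) : Prop := ∀ x ∈ S, (G.neighborSet x ∩ S).ncard = r

/-- The conclusion of the key counting lemma for vertex set `A`. -/
def KeyP (A : Set V) : Prop :=
  ∃ S0 S1 S2 : Set V, S0 ⊆ A ∧ S1 ⊆ A ∧ S2 ⊆ A ∧
    RegS G 0 S0 ∧ RegS G 1 S1 ∧ RegS G 2 S2 ∧
    5 * A.ncard ≤ 8 * S0.ncard + 2 * S1.ncard + S2.ncard

lemma regS_union {r : ℕ} {T S A D : Set V} (hTD : T ⊆ D) (hSA : S ⊆ A \ D)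
    (hDA : D ⊆ A) (hnb : ∀ x ∈ T, G.neighborSet x ∩ A ⊆ D)
    (hT : RegS G r T) (hS : RegS G r S) : RegS G r (T ∪ S) := by
  intro x hx
  have hdisj : ∀ y ∈ T, ∀ z ∈ S, ¬ G.Adj y z := by
    intro y hy z hz hadj
    have : z ∈ G.neighborSet y ∩ A := ⟨hadj, (hSA hz).1⟩
    exact (hSA hz).2 (hnb y hy this)
  rcases hx with hx | hx
  · have : G.neighborSet x ∩ (T ∪ S) = G.neighborSet x ∩ T := by
      ext z; simp only [Set.mem_inter_iff, Set.mem_union]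
      constructor
      · rintro ⟨hadj, hz | hz⟩
        · exact ⟨hadj, hz⟩
        · exact absurd hadj (hdisj x hx z hz)
      · rintro ⟨hadj, hz⟩; exact ⟨hadj, Or.inl hz⟩
    rw [this]; exact hT x hx
  · have : G.neighborSet x ∩ (T ∪ S) = G.neighborSet x ∩ S := by
      ext z; simp only [Set.mem_inter_iff, Set.mem_union]
      constructor
      · rintro ⟨hadj, hz | hz⟩
        · exact absurd (G.adj_symm hadj) (hdisj z hz x hx)
        · exact ⟨hadj, hz⟩
      · rintro ⟨hadj, hz⟩; exact ⟨hadj, Or.inr hz⟩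
    rw [this]; exact hS x hx

/-- The surgery lemma: delete a chunk `D` from `A` whose chosen pieces only look inside `D`. -/
lemma surgery {A D : Set V} (hDA : D ⊆ A) {T0 T1 T2 : Set V}
    (hT0 : T0 ⊆ D) (hT1 : T1 ⊆ D) (hT2 : T2 ⊆ D)
    (hnb : ∀ x, x ∈ T0 ∪ T1 ∪ T2 → G.neighborSet x ∩ A ⊆ D)
    (r0 : RegS G 0 T0) (r1 : RegS G 1 T1) (r2 : RegS G 2 T2)
    (hcnt : 5 * D.ncard ≤ 8 * T0.ncard + 2 * T1.ncard + T2.ncard)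
    (prev : KeyP G (A \ D)) : KeyP G A := by
  obtain ⟨S0, S1, S2, hS0, hS1, hS2, q0, q1, q2, hq⟩ := prev
  have hnb0 : ∀ x ∈ T0, G.neighborSet x ∩ A ⊆ D := fun x hx => hnb x (by simp [hx])
  have hnb1 : ∀ x ∈ T1, G.neighborSet x ∩ A ⊆ D := fun x hx => hnb x (by simp [hx])
  have hnb2 : ∀ x ∈ T2, G.neighborSet x ∩ A ⊆ D := fun x hx => hnb x (by simp [hx])
  refine ⟨T0 ∪ S0, T1 ∪ S1, T2 ∪ S2, ?_, ?_, ?_, ?_, ?_, ?_, ?_⟩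
  · exact Set.union_subset (hT0.trans hDA) (hS0.trans (Set.diff_subset))
  · exact Set.union_subset (hT1.trans hDA) (hS1.trans (Set.diff_subset))
  · exact Set.union_subset (hT2.trans hDA) (hS2.trans (Set.diff_subset))
  · exact regS_union G hT0 hS0 hDA hnb0 r0 q0
  · exact regS_union G hT1 hS1 hDA hnb1 r1 q1
  · exact regS_union G hT2 hS2 hDA hnb2 r2 q2
  · have hdisj : ∀ T S : Set V, T ⊆ D → S ⊆ A \ D → Disjoint T S := by
      intro T S hT hS
      exact Set.disjoint_of_subset hT hS (Set.disjoint_sdiff_right.mono_left le_rfl)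
    have e0 : (T0 ∪ S0).ncard = T0.ncard + S0.ncard :=
      Set.ncard_union_eq (hdisj _ _ hT0 hS0) (Set.toFinite _) (Set.toFinite _)
    have e1 : (T1 ∪ S1).ncard = T1.ncard + S1.ncard :=
      Set.ncard_union_eq (hdisj _ _ hT1 hS1) (Set.toFinite _) (Set.toFinite _)
    have e2 : (T2 ∪ S2).ncard = T2.ncard + S2.ncard :=
      Set.ncard_union_eq (hdisj _ _ hT2 hS2) (Set.toFinite _) (Set.toFinite _)
    have eA : A.ncard = D.ncard + (A \ D).ncard := by
      have := Set.ncard_le_ncard hDA (Set.toFinite A)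
      rw [Set.ncard_diff hDA (Set.toFinite _)]
      omega
    rw [e0, e1, e2, eA]; omega

end Aux

section Aux2
variable {V : Type} [Finite V] (G : SimpleGraph V)

lemma ncardLeOne {s : Set V} (h : s.ncard ≤ 1) : s = ∅ ∨ ∃ a, s = {a} := by
  rcases s.eq_empty_or_nonempty with rfl | ⟨a, ha⟩
  · exact Or.inl rfl
  · refine Or.inr ⟨a, ?_⟩
    exact (Set.eq_of_subset_of_ncard_le (by simpa using ha)
      (by simpa using h) (Set.toFinite s)).symm

lemma pair_set {s : Set V} (h : s.ncard ≤ 2) {p : V} (hp : p ∈ s) :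
    s = {p} ∨ ∃ q, q ≠ p ∧ s = {p, q} := by
  by_cases hsub : s ⊆ {p}
  · exact Or.inl (Set.Subset.antisymm hsub (by simpa using hp))
  · obtain ⟨q, hq, hqp⟩ := Set.not_subset.mp hsub
    refine Or.inr ⟨q, by simpa using hqp, ?_⟩
    refine (Set.eq_of_subset_of_ncard_le ?_ ?_ (Set.toFinite s)).symm
    · exact Set.insert_subset hp (by simpa using hq)
    · rwa [Set.ncard_pair (by simpa using (Ne.symm (by simpa using hqp)))]

lemma eq_pair {s : Set V} (h2 : s.ncard = 2) {a b : V} (ha : a ∈ s) (hb : b ∈ s)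
    (hab : a ≠ b) : s = {a, b} := by
  symm
  apply Set.eq_of_subset_of_ncard_le (by simp [Set.insert_subset_iff, ha, hb]) _ (Set.toFinite s)
  rw [h2, Set.ncard_pair hab]

lemma nbr_inter_eq {x : V} {T A : Set V} (hTA : T ⊆ A) :
    G.neighborSet x ∩ T = (G.neighborSet x ∩ A) ∩ T := by
  ext z; constructor
  · rintro ⟨h1, h2⟩; exact ⟨⟨h1, hTA h2⟩, h2⟩
  · rintro ⟨⟨h1, _⟩, h2⟩; exact ⟨h1, h2⟩

lemma nbrA_le (hdeg : ∀ v, (G.neighborSet v).ncard ≤ 2) (A : Set V) (x : V) :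
    (G.neighborSet x ∩ A).ncard ≤ 2 :=
  le_trans (Set.ncard_le_ncard Set.inter_subset_left (Set.toFinite _)) (hdeg x)

end Aux2

section CaseA
variable {V : Type} [Finite V] (G : SimpleGraph V)

lemma regS_empty (r : ℕ) : RegS G r (∅ : Set V) := fun x hx => absurd hx (Set.notMem_empty x)

lemma nbr_eval {A T : Set V} (hTA : T ⊆ A) {x : V} {E : Set V}
    (hx : G.neighborSet x ∩ A = E) : G.neighborSet x ∩ T = E ∩ T := by
  rw [nbr_inter_eq G hTA, hx]

/-- evaluate a singleton intersection -/
lemma sinter_mem {a : V} {T : Set V} (h : a ∈ T) : ({a} : Set V) ∩ T = {a} := by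
  apply Set.Subset.antisymm Set.inter_subset_left
  intro z hz; rcases hz with rfl; exact ⟨rfl, h⟩

lemma sinter_not_mem {a : V} {T : Set V} (h : a ∉ T) : ({a} : Set V) ∩ T = ∅ :=
  Set.singleton_inter_eq_empty.mpr h

lemma pinter_left {a b : V} {T : Set V} (ha : a ∈ T) (hb : b ∉ T) :
    ({a, b} : Set V) ∩ T = {a} := by
  rw [Set.insert_inter_of_mem ha, sinter_not_mem hb]; simp

lemma pinter_right {a b : V} {T : Set V} (ha : a ∉ T) (hb : b ∈ T) :
    ({a, b} : Set V) ∩ T = {b} := by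
  rw [Set.insert_inter_of_notMem ha, sinter_mem hb]

lemma pinter_none {a b : V} {T : Set V} (ha : a ∉ T) (hb : b ∉ T) :
    ({a, b} : Set V) ∩ T = ∅ := by
  rw [Set.insert_inter_of_notMem ha, sinter_not_mem hb]

end CaseA

section CaseAMain
variable {V : Type} [Finite V] (G : SimpleGraph V)

lemma caseA (hdeg : ∀ v, (G.neighborSet v).ncard ≤ 2) {A : Set V} {v1 : V}
    (hv1 : v1 ∈ A) (h1 : (G.neighborSet v1 ∩ A).ncard ≤ 1)
    (prev : ∀ D : Set V, D ⊆ A → D.Nonempty → KeyP G (A \ D)) : KeyP G A := by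
  rcases ncardLeOne h1 with n1 | ⟨v2, n1⟩
  · -- length 1
    have hDA : ({v1} : Set V) ⊆ A := by simpa using hv1
    refine surgery G (D := {v1}) (T0 := {v1}) (T1 := ∅) (T2 := ∅) hDA le_rfl
      (Set.empty_subset _) (Set.empty_subset _) ?_ ?_ (regS_empty G 1) (regS_empty G 2) ?_
      (prev _ hDA ⟨v1, rfl⟩)
    · intro x hx
      simp only [Set.union_empty, Set.mem_singleton_iff] at hx
      subst hx; rw [n1]; exact Set.empty_subset _
    · intro x hx
      rcases hx with rfl
      rw [nbr_eval G hDA n1, Set.empty_inter]; exact Set.ncard_empty _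
    · simp [Set.ncard_singleton]
  -- v2 exists
  have hm2 : v2 ∈ G.neighborSet v1 ∩ A := by rw [n1]; exact Set.mem_singleton _
  have hadj12 : G.Adj v1 v2 := hm2.1
  have hA2 : v2 ∈ A := hm2.2
  have d12 : v1 ≠ v2 := G.ne_of_adj hadj12
  have hv1n2 : v1 ∈ G.neighborSet v2 ∩ A := ⟨hadj12.symm, hv1⟩
  rcases pair_set (nbrA_le G hdeg A v2) hv1n2 with n2 | ⟨v3, hne31, n2⟩
  · -- length 2
    have hDA : ({v1, v2} : Set V) ⊆ A := by simp [Set.insert_subset_iff, hv1, hA2]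
    have hT0 : ({v1} : Set V) ⊆ {v1, v2} := by simp [Set.insert_subset_iff]
    refine surgery G (D := {v1, v2}) (T0 := {v1}) (T1 := {v1, v2}) (T2 := ∅) hDA hT0
      le_rfl (Set.empty_subset _) ?_ ?_ ?_ (regS_empty G 2) ?_
      (prev _ hDA ⟨v1, by simp⟩)
    · intro x hx
      simp only [Set.union_empty, Set.mem_union, Set.mem_insert_iff, Set.mem_singleton_iff] at hx
      rcases hx with (rfl | rfl | rfl)
      · rw [n1]; simp [Set.insert_subset_iff]
      · rw [n1]; simp [Set.insert_subset_iff]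
      · rw [n2]; simp [Set.insert_subset_iff]
    · intro x hx
      rcases hx with rfl
      rw [nbr_eval G (hT0.trans hDA) n1, sinter_not_mem (by simp [d12.symm])]
      exact Set.ncard_empty _
    · intro x hx
      simp only [Set.mem_insert_iff, Set.mem_singleton_iff] at hx
      rcases hx with rfl | rfl
      · rw [nbr_eval G hDA n1, sinter_mem (by simp)]; exact Set.ncard_singleton _
      · rw [nbr_eval G hDA n2, sinter_mem (by simp)]; exact Set.ncard_singleton _
    · rw [Set.ncard_pair d12]; simp [Set.ncard_singleton]
  -- v3 exists
  have hm3 : v3 ∈ G.neighborSet v2 ∩ A := by rw [n2]; simp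
  have hadj23 : G.Adj v2 v3 := hm3.1
  have hA3 : v3 ∈ A := hm3.2
  have d23 : v2 ≠ v3 := G.ne_of_adj hadj23
  have d13 : v1 ≠ v3 := hne31.symm
  have hv2n3 : v2 ∈ G.neighborSet v3 ∩ A := ⟨hadj23.symm, hA2⟩
  rcases pair_set (nbrA_le G hdeg A v3) hv2n3 with n3 | ⟨v4, hne42, n3⟩
  · -- length 3
    have hDA : ({v1, v2, v3} : Set V) ⊆ A := by simp [Set.insert_subset_iff, hv1, hA2, hA3]
    have hT0 : ({v1, v3} : Set V) ⊆ {v1, v2, v3} := by simp [Set.insert_subset_iff]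
    have hT1 : ({v1, v2} : Set V) ⊆ {v1, v2, v3} := by simp [Set.insert_subset_iff]
    refine surgery G (D := {v1, v2, v3}) (T0 := {v1, v3}) (T1 := {v1, v2}) (T2 := ∅) hDA hT0
      hT1 (Set.empty_subset _) ?_ ?_ ?_ (regS_empty G 2) ?_
      (prev _ hDA ⟨v1, by simp⟩)
    · intro x hx
      simp only [Set.union_empty, Set.mem_union, Set.mem_insert_iff, Set.mem_singleton_iff] at hx
      rcases hx with ((rfl | rfl) | rfl | rfl)
      · rw [n1]; simp [Set.insert_subset_iff]
      · rw [n3]; simp [Set.insert_subset_iff]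
      · rw [n1]; simp [Set.insert_subset_iff]
      · rw [n2]; simp [Set.insert_subset_iff]
    · intro x hx
      simp only [Set.mem_insert_iff, Set.mem_singleton_iff] at hx
      rcases hx with rfl | rfl
      · rw [nbr_eval G (hT0.trans hDA) n1, sinter_not_mem (by simp [d12.symm, d23])]
        exact Set.ncard_empty _
      · rw [nbr_eval G (hT0.trans hDA) n3, sinter_not_mem (by simp [d12.symm, d23])]
        exact Set.ncard_empty _
    · intro x hx
      simp only [Set.mem_insert_iff, Set.mem_singleton_iff] at hx
      rcases hx with rfl | rfl
      · rw [nbr_eval G (hT1.trans hDA) n1, sinter_mem (by simp)]; exact Set.ncard_singleton _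
      · rw [nbr_eval G (hT1.trans hDA) n2, pinter_left (by simp) (by simp [d13.symm, d23.symm])]
        exact Set.ncard_singleton _
    · rw [Set.ncard_insert_of_notMem (by simp [d12, d13]), Set.ncard_pair d23,
        Set.ncard_pair d13, Set.ncard_pair d12]
      simp
  -- v4 exists
  have hm4 : v4 ∈ G.neighborSet v3 ∩ A := by rw [n3]; simp
  have hadj34 : G.Adj v3 v4 := hm4.1
  have hA4 : v4 ∈ A := hm4.2
  have d34 : v3 ≠ v4 := G.ne_of_adj hadj34
  have d24 : v2 ≠ v4 := hne42.symm
  have d14 : v1 ≠ v4 := by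
    intro h
    have hx : G.Adj v1 v3 := by rw [h]; exact hadj34.symm
    have : v3 ∈ G.neighborSet v1 ∩ A := ⟨hx, hA3⟩
    rw [n1] at this
    exact d23 (Set.mem_singleton_iff.mp this).symm
  have hv3n4 : v3 ∈ G.neighborSet v4 ∩ A := ⟨hadj34.symm, hA3⟩
  rcases pair_set (nbrA_le G hdeg A v4) hv3n4 with n4 | ⟨v5, hne53, n4⟩
  · -- length 4
    have hDA : ({v1, v2, v3, v4} : Set V) ⊆ A := by
      simp [Set.insert_subset_iff, hv1, hA2, hA3, hA4]
    have hT0 : ({v1, v3} : Set V) ⊆ {v1, v2, v3, v4} := by simp [Set.insert_subset_iff]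
    have hT1 : ({v1, v2} : Set V) ⊆ {v1, v2, v3, v4} := by simp [Set.insert_subset_iff]
    refine surgery G (D := {v1, v2, v3, v4}) (T0 := {v1, v3}) (T1 := {v1, v2}) (T2 := ∅) hDA hT0
      hT1 (Set.empty_subset _) ?_ ?_ ?_ (regS_empty G 2) ?_
      (prev _ hDA ⟨v1, by simp⟩)
    · intro x hx
      simp only [Set.union_empty, Set.mem_union, Set.mem_insert_iff, Set.mem_singleton_iff] at hx
      rcases hx with ((rfl | rfl) | rfl | rfl)
      · rw [n1]; simp [Set.insert_subset_iff]
      · rw [n3]; simp [Set.insert_subset_iff]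
      · rw [n1]; simp [Set.insert_subset_iff]
      · rw [n2]; simp [Set.insert_subset_iff]
    · intro x hx
      simp only [Set.mem_insert_iff, Set.mem_singleton_iff] at hx
      rcases hx with rfl | rfl
      · rw [nbr_eval G (hT0.trans hDA) n1, sinter_not_mem (by simp [d12.symm, d23])]
        exact Set.ncard_empty _
      · rw [nbr_eval G (hT0.trans hDA) n3,
          pinter_none (by simp [d12.symm, d23]) (by simp [d14.symm, d34.symm])]
        exact Set.ncard_empty _
    · intro x hx
      simp only [Set.mem_insert_iff, Set.mem_singleton_iff] at hx
      rcases hx with rfl | rfl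
      · rw [nbr_eval G (hT1.trans hDA) n1, sinter_mem (by simp)]; exact Set.ncard_singleton _
      · rw [nbr_eval G (hT1.trans hDA) n2, pinter_left (by simp) (by simp [d13.symm, d23.symm])]
        exact Set.ncard_singleton _
    · rw [Set.ncard_insert_of_notMem (by simp [d12, d13, d14]),
        Set.ncard_insert_of_notMem (by simp [d23, d24]), Set.ncard_pair d34,
        Set.ncard_pair d13, Set.ncard_pair d12]
      simp
  -- v5 exists
  have hm5 : v5 ∈ G.neighborSet v4 ∩ A := by rw [n4]; simp
  have hadj45 : G.Adj v4 v5 := hm5.1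
  have hA5 : v5 ∈ A := hm5.2
  have d45 : v4 ≠ v5 := G.ne_of_adj hadj45
  have d35 : v3 ≠ v5 := hne53.symm
  have d25 : v2 ≠ v5 := by
    intro h
    have hx : G.Adj v2 v4 := by rw [h]; exact hadj45.symm
    have : v4 ∈ G.neighborSet v2 ∩ A := ⟨hx, hA4⟩
    rw [n2] at this
    rcases this with h' | h'
    · exact d14 h'.symm
    · exact d34 (Set.mem_singleton_iff.mp h').symm
  have d15 : v1 ≠ v5 := by
    intro h
    have hx : G.Adj v1 v4 := by rw [h]; exact hadj45.symm
    have : v4 ∈ G.neighborSet v1 ∩ A := ⟨hx, hA4⟩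
    rw [n1] at this
    exact d24 (Set.mem_singleton_iff.mp this).symm
  have hv4n5 : v4 ∈ G.neighborSet v5 ∩ A := ⟨hadj45.symm, hA4⟩
  rcases pair_set (nbrA_le G hdeg A v5) hv4n5 with n5 | ⟨v6, hne64, n5⟩
  · -- length 5
    have hDA : ({v1, v2, v3, v4, v5} : Set V) ⊆ A := by
      simp [Set.insert_subset_iff, hv1, hA2, hA3, hA4, hA5]
    have hT0 : ({v1, v3, v5} : Set V) ⊆ {v1, v2, v3, v4, v5} := by simp [Set.insert_subset_iff]
    have hT1 : ({v1, v2, v4, v5} : Set V) ⊆ {v1, v2, v3, v4, v5} := by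
      simp [Set.insert_subset_iff]
    refine surgery G (D := {v1, v2, v3, v4, v5}) (T0 := {v1, v3, v5}) (T1 := {v1, v2, v4, v5})
      (T2 := ∅) hDA hT0 hT1 (Set.empty_subset _) ?_ ?_ ?_ (regS_empty G 2) ?_
      (prev _ hDA ⟨v1, by simp⟩)
    · intro x hx
      simp only [Set.union_empty, Set.mem_union, Set.mem_insert_iff, Set.mem_singleton_iff] at hx
      rcases hx with ((rfl | rfl | rfl) | rfl | rfl | rfl | rfl)
      · rw [n1]; simp [Set.insert_subset_iff]
      · rw [n3]; simp [Set.insert_subset_iff]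
      · rw [n5]; simp [Set.insert_subset_iff]
      · rw [n1]; simp [Set.insert_subset_iff]
      · rw [n2]; simp [Set.insert_subset_iff]
      · rw [n4]; simp [Set.insert_subset_iff]
      · rw [n5]; simp [Set.insert_subset_iff]
    · intro x hx
      simp only [Set.mem_insert_iff, Set.mem_singleton_iff] at hx
      rcases hx with rfl | rfl | rfl
      · rw [nbr_eval G (hT0.trans hDA) n1, sinter_not_mem (by simp [d12.symm, d23, d25])]
        exact Set.ncard_empty _
      · rw [nbr_eval G (hT0.trans hDA) n3,
          pinter_none (by simp [d12.symm, d23, d25]) (by simp [d14.symm, d34.symm, d45])]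
        exact Set.ncard_empty _
      · rw [nbr_eval G (hT0.trans hDA) n5,
          sinter_not_mem (by simp [d14.symm, d34.symm, d45])]
        exact Set.ncard_empty _
    · intro x hx
      simp only [Set.mem_insert_iff, Set.mem_singleton_iff] at hx
      rcases hx with rfl | rfl | rfl | rfl
      · rw [nbr_eval G (hT1.trans hDA) n1, sinter_mem (by simp)]; exact Set.ncard_singleton _
      · rw [nbr_eval G (hT1.trans hDA) n2,
          pinter_left (by simp) (by simp [d13.symm, d23.symm, d34, d35])]
        exact Set.ncard_singleton _
      · rw [nbr_eval G (hT1.trans hDA) n4,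
          pinter_right (by simp [d13.symm, d23.symm, d34, d35]) (by simp)]
        exact Set.ncard_singleton _
      · rw [nbr_eval G (hT1.trans hDA) n5, sinter_mem (by simp)]; exact Set.ncard_singleton _
    · rw [Set.ncard_insert_of_notMem (by simp [d12, d13, d14, d15]),
        Set.ncard_insert_of_notMem (by simp [d23, d24, d25]),
        Set.ncard_insert_of_notMem (by simp [d34, d35]), Set.ncard_pair d45,
        Set.ncard_insert_of_notMem (by simp [d13, d15]), Set.ncard_pair d35,
        Set.ncard_insert_of_notMem (by simp [d12, d14, d15]),
        Set.ncard_insert_of_notMem (by simp [d24, d25]), Set.ncard_pair d45]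
      simp
  -- v6 exists : length 6
  have hm6 : v6 ∈ G.neighborSet v5 ∩ A := by rw [n5]; simp
  have hadj56 : G.Adj v5 v6 := hm6.1
  have hA6 : v6 ∈ A := hm6.2
  have d56 : v5 ≠ v6 := G.ne_of_adj hadj56
  have d46 : v4 ≠ v6 := hne64.symm
  have d36 : v3 ≠ v6 := by
    intro h
    have hx : G.Adj v3 v5 := by rw [h]; exact hadj56.symm
    have : v5 ∈ G.neighborSet v3 ∩ A := ⟨hx, hA5⟩
    rw [n3] at this
    rcases this with h' | h'
    · exact d25 h'.symm
    · exact d45 (Set.mem_singleton_iff.mp h').symm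
  have d26 : v2 ≠ v6 := by
    intro h
    have hx : G.Adj v2 v5 := by rw [h]; exact hadj56.symm
    have : v5 ∈ G.neighborSet v2 ∩ A := ⟨hx, hA5⟩
    rw [n2] at this
    rcases this with h' | h'
    · exact d15 h'.symm
    · exact d35 (Set.mem_singleton_iff.mp h').symm
  have d16 : v1 ≠ v6 := by
    intro h
    have hx : G.Adj v1 v5 := by rw [h]; exact hadj56.symm
    have : v5 ∈ G.neighborSet v1 ∩ A := ⟨hx, hA5⟩
    rw [n1] at this
    exact d25 (Set.mem_singleton_iff.mp this).symm
  have hDA : ({v1, v2, v3, v4, v5, v6} : Set V) ⊆ A := by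
    simp [Set.insert_subset_iff, hv1, hA2, hA3, hA4, hA5, hA6]
  have hT0 : ({v1, v3, v5} : Set V) ⊆ {v1, v2, v3, v4, v5, v6} := by
    simp [Set.insert_subset_iff]
  have hT1 : ({v1, v2, v4, v5} : Set V) ⊆ {v1, v2, v3, v4, v5, v6} := by
    simp [Set.insert_subset_iff]
  refine surgery G (D := {v1, v2, v3, v4, v5, v6}) (T0 := {v1, v3, v5})
    (T1 := {v1, v2, v4, v5}) (T2 := ∅) hDA hT0 hT1 (Set.empty_subset _) ?_ ?_ ?_
    (regS_empty G 2) ?_ (prev _ hDA ⟨v1, by simp⟩)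
  · intro x hx
    simp only [Set.union_empty, Set.mem_union, Set.mem_insert_iff, Set.mem_singleton_iff] at hx
    rcases hx with ((rfl | rfl | rfl) | rfl | rfl | rfl | rfl)
    · rw [n1]; simp [Set.insert_subset_iff]
    · rw [n3]; simp [Set.insert_subset_iff]
    · rw [n5]; simp [Set.insert_subset_iff]
    · rw [n1]; simp [Set.insert_subset_iff]
    · rw [n2]; simp [Set.insert_subset_iff]
    · rw [n4]; simp [Set.insert_subset_iff]
    · rw [n5]; simp [Set.insert_subset_iff]
  · intro x hx
    simp only [Set.mem_insert_iff, Set.mem_singleton_iff] at hx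
    rcases hx with rfl | rfl | rfl
    · rw [nbr_eval G (hT0.trans hDA) n1, sinter_not_mem (by simp [d12.symm, d23, d25])]
      exact Set.ncard_empty _
    · rw [nbr_eval G (hT0.trans hDA) n3,
        pinter_none (by simp [d12.symm, d23, d25]) (by simp [d14.symm, d34.symm, d45])]
      exact Set.ncard_empty _
    · rw [nbr_eval G (hT0.trans hDA) n5,
        pinter_none (by simp [d14.symm, d34.symm, d45]) (by simp [d16.symm, d36.symm, d56.symm])]
      exact Set.ncard_empty _
  · intro x hx
    simp only [Set.mem_insert_iff, Set.mem_singleton_iff] at hx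
    rcases hx with rfl | rfl | rfl | rfl
    · rw [nbr_eval G (hT1.trans hDA) n1, sinter_mem (by simp)]; exact Set.ncard_singleton _
    · rw [nbr_eval G (hT1.trans hDA) n2,
        pinter_left (by simp) (by simp [d13.symm, d23.symm, d34, d35])]
      exact Set.ncard_singleton _
    · rw [nbr_eval G (hT1.trans hDA) n4,
        pinter_right (by simp [d13.symm, d23.symm, d34, d35]) (by simp)]
      exact Set.ncard_singleton _
    · rw [nbr_eval G (hT1.trans hDA) n5,
        pinter_left (by simp) (by simp [d16.symm, d26.symm, d46.symm, d56.symm])]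
      exact Set.ncard_singleton _
  · rw [Set.ncard_insert_of_notMem (by simp [d12, d13, d14, d15, d16]),
      Set.ncard_insert_of_notMem (by simp [d23, d24, d25, d26]),
      Set.ncard_insert_of_notMem (by simp [d34, d35, d36]),
      Set.ncard_insert_of_notMem (by simp [d45, d46]), Set.ncard_pair d56,
      Set.ncard_insert_of_notMem (by simp [d13, d15]), Set.ncard_pair d35,
      Set.ncard_insert_of_notMem (by simp [d12, d14, d15]),
      Set.ncard_insert_of_notMem (by simp [d24, d25]), Set.ncard_pair d45]
    simp

end CaseAMain

section Walk
variable {V : Type} [Finite V] (G : SimpleGraph V)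

noncomputable def stepF (A : Set V) (d : V) (b a : V) : V :=
  letI := Classical.propDecidable (∃ q, q ≠ a ∧ G.neighborSet b ∩ A = {a, q})
  if h : ∃ q, q ≠ a ∧ G.neighborSet b ∩ A = {a, q} then h.choose else d

lemma stepF_spec {A : Set V} (d : V) {b a : V}
    (h : ∃ q, q ≠ a ∧ G.neighborSet b ∩ A = {a, q}) :
    stepF G A d b a ≠ a ∧ G.neighborSet b ∩ A = {a, stepF G A d b a} := by
  rw [stepF]
  split
  · exact h.choose_spec
  · exact absurd h (by assumption)

noncomputable def walkP (A : Set V) (d : V) (ab : V × V) : ℕ → V × V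
  | 0 => ab
  | n + 1 => ((walkP A d ab n).2, stepF G A d (walkP A d ab n).2 (walkP A d ab n).1)

lemma caseB_walk {A : Set V} (hdeg : ∀ v, (G.neighborSet v).ncard ≤ 2)
    (hB : ∀ v ∈ A, (G.neighborSet v ∩ A).ncard = 2) {v0 v1 : V} (h0 : v0 ∈ A)
    (h1 : v1 ∈ G.neighborSet v0 ∩ A) :
    ∀ n, (walkP G A v0 (v0, v1) n).1 ∈ A ∧
      (walkP G A v0 (v0, v1) n).2 ∈ G.neighborSet (walkP G A v0 (v0, v1) n).1 ∩ A := by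
  have hEx : ∀ b ∈ A, ∀ a ∈ G.neighborSet b ∩ A, ∃ q, q ≠ a ∧ G.neighborSet b ∩ A = {a, q} := by
    intro b hb a ha
    rcases pair_set (nbrA_le G hdeg A b) ha with h | ⟨q, hq, h⟩
    · exfalso
      have h2 := hB b hb
      rw [h, Set.ncard_singleton] at h2
      omega
    · exact ⟨q, hq, h⟩
  intro n
  induction n with
  | zero => exact ⟨h0, h1⟩
  | succ n ihn =>
    obtain ⟨ha, hb⟩ := ihn
    have hbA : (walkP G A v0 (v0, v1) n).2 ∈ A := hb.2
    have hab : (walkP G A v0 (v0, v1) n).1 ∈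
        G.neighborSet (walkP G A v0 (v0, v1) n).2 ∩ A := ⟨hb.1.symm, ha⟩
    have hspec := stepF_spec G v0 (hEx _ hbA _ hab)
    refine ⟨hbA, ?_⟩
    show stepF G A v0 _ _ ∈ _
    rw [walkP]
    rw [hspec.2]; simp

lemma caseB_char {A : Set V} (hdeg : ∀ v, (G.neighborSet v).ncard ≤ 2)
    (hB : ∀ v ∈ A, (G.neighborSet v ∩ A).ncard = 2) {v0 v1 : V} (h0 : v0 ∈ A)
    (h1 : v1 ∈ G.neighborSet v0 ∩ A) :
    ∀ n, (fun m => (walkP G A v0 (v0, v1) m).1) (n + 2) ≠ (fun m => (walkP G A v0 (v0, v1) m).1) n ∧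
      G.neighborSet ((fun m => (walkP G A v0 (v0, v1) m).1) (n + 1)) ∩ A =
        {(fun m => (walkP G A v0 (v0, v1) m).1) n, (fun m => (walkP G A v0 (v0, v1) m).1) (n + 2)} := by
  have hEx : ∀ b ∈ A, ∀ a ∈ G.neighborSet b ∩ A, ∃ q, q ≠ a ∧ G.neighborSet b ∩ A = {a, q} := by
    intro b hb a ha
    rcases pair_set (nbrA_le G hdeg A b) ha with h | ⟨q, hq, h⟩
    · exfalso
      have h2 := hB b hb
      rw [h, Set.ncard_singleton] at h2
      omega
    · exact ⟨q, hq, h⟩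
  intro n
  obtain ⟨ha, hb⟩ := caseB_walk G hdeg hB h0 h1 n
  have hbA : (walkP G A v0 (v0, v1) n).2 ∈ A := hb.2
  have hab : (walkP G A v0 (v0, v1) n).1 ∈
      G.neighborSet (walkP G A v0 (v0, v1) n).2 ∩ A := ⟨hb.1.symm, ha⟩
  have hspec := stepF_spec G v0 (hEx _ hbA _ hab)
  have e1 : (walkP G A v0 (v0, v1) (n+1)).1 = (walkP G A v0 (v0, v1) n).2 := by rw [walkP]
  have e2 : (walkP G A v0 (v0, v1) (n+2)).1 =
      stepF G A v0 (walkP G A v0 (v0, v1) n).2 (walkP G A v0 (v0, v1) n).1 := by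
    rw [walkP, walkP]
  constructor
  · simp only [e2]; exact hspec.1
  · simp only [e1, e2]; exact hspec.2

end Walk

section CaseBMain
variable {V : Type} [Finite V] (G : SimpleGraph V)

lemma walkP_succ_fst (A : Set V) (d : V) (ab : V × V) (n : ℕ) :
    (walkP G A d ab (n+1)).1 = (walkP G A d ab n).2 := rfl

lemma ncard_Iio (n : ℕ) : (Set.Iio n).ncard = n := by
  rw [← Nat.card_coe_set_eq]
  simp [Nat.card_eq_card_toFinset]

lemma caseB (hdeg : ∀ v, (G.neighborSet v).ncard ≤ 2) {A : Set V} (hAne : A.Nonempty)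
    (hB : ∀ v ∈ A, (G.neighborSet v ∩ A).ncard = 2)
    (prev : ∀ D : Set V, D ⊆ A → D.Nonempty → KeyP G (A \ D)) : KeyP G A := by
  classical
  obtain ⟨v0, h0⟩ := hAne
  have hne1 : (G.neighborSet v0 ∩ A).Nonempty := by
    apply Set.nonempty_of_ncard_ne_zero
    rw [hB v0 h0]; omega
  obtain ⟨v1, h1⟩ := hne1
  set w : ℕ → V := fun m => (walkP G A v0 (v0, v1) m).1 with hw
  have hwA : ∀ n, w n ∈ A := fun n => (caseB_walk G hdeg hB h0 h1 n).1
  have hwadj : ∀ n, w (n+1) ∈ G.neighborSet (w n) ∩ A := by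
    intro n
    have h := (caseB_walk G hdeg hB h0 h1 n).2
    have e : w (n+1) = (walkP G A v0 (v0, v1) n).2 := walkP_succ_fst G A v0 (v0, v1) n
    rw [e]; exact h
  have hback : ∀ n, w (n+2) ≠ w n := fun n => (caseB_char G hdeg hB h0 h1 n).1
  have hchar : ∀ n, G.neighborSet (w (n+1)) ∩ A = {w n, w (n+2)} :=
    fun n => (caseB_char G hdeg hB h0 h1 n).2
  -- find the first return
  obtain ⟨a, b, hab, heq⟩ :=
    Finite.exists_ne_map_eq_of_infinite (fun n => (⟨w n, hwA n⟩ : A))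
  have heq' : w a = w b := congrArg Subtype.val heq
  have hPex : ∃ j, ∃ i, i < j ∧ w i = w j := by
    rcases lt_or_gt_of_ne hab with h | h
    · exact ⟨b, a, h, heq'⟩
    · exact ⟨a, b, h, heq'.symm⟩
  obtain ⟨k, hkspec, hkmin⟩ : ∃ k : ℕ, (∃ i, i < k ∧ w i = w k) ∧
      ∀ j, j < k → ¬∃ i, i < j ∧ w i = w j := by
    refine ⟨Nat.find hPex, ?_, ?_⟩
    · obtain ⟨i, hi1, hi2⟩ := Nat.find_spec hPex
      exact ⟨i, hi1, hi2⟩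
    · intro j hj hcon
      obtain ⟨i, hi1, hi2⟩ := hcon
      exact Nat.find_min hPex hj ⟨i, hi1, hi2⟩
  obtain ⟨i, hik, hieq⟩ := hkspec
  have hinj : ∀ a b, a < k → b < k → w a = w b → a = b := by
    intro a b ha hb hw2
    rcases lt_trichotomy a b with h | h | h
    · exact absurd ⟨a, h, hw2⟩ (hkmin b hb)
    · exact h
    · exact absurd ⟨b, h, hw2.symm⟩ (hkmin a ha)
  have hadj_ne : ∀ n, w n ≠ w (n+1) := by
    intro n
    exact G.ne_of_adj (hwadj n).1
  have hi0 : i = 0 := by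
    by_contra hi0
    obtain ⟨m, rfl⟩ : ∃ m, i = m + 1 := ⟨i - 1, by omega⟩
    have hki : k ≠ m + 2 := by
      intro h
      exact hadj_ne (m+1) (by rw [hieq, h])
    obtain ⟨l, rfl⟩ : ∃ l, k = l + 1 := ⟨k - 1, by omega⟩
    have h1' : w l ∈ G.neighborSet (w (l+1)) ∩ A := by
      rw [hchar l]; simp
    rw [← hieq, hchar m] at h1'
    simp only [Set.mem_insert_iff, Set.mem_singleton_iff] at h1'
    rcases h1' with h' | h'
    · have := hinj l m (by omega) (by omega) h'
      omega
    · have hm2 : m + 2 < l + 1 := by omega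
      have := hinj l (m+2) (by omega) (by omega) h'
      have hk2 : l + 1 = m + 3 := by omega
      exact hback (m+1) (by rw [← hk2, ← hieq])
  subst hi0
  have hk1 : k ≠ 1 := by
    intro h
    subst h
    exact hadj_ne 0 hieq
  have hk2 : k ≠ 2 := by
    intro h
    subst h
    exact hback 0 hieq.symm
  have hk3 : 3 ≤ k := by omega
  have hwk0 : w k = w 0 := hieq.symm
  have hchar0 : G.neighborSet (w 0) ∩ A = {w 1, w (k-1)} := by
    apply eq_pair (hB (w 0) (hwA 0)) (hwadj 0)
    · obtain ⟨l, hl⟩ : ∃ l, k = l + 1 := ⟨k - 1, by omega⟩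
      have : G.Adj (w l) (w (l+1)) := (hwadj l).1
      have hadj0 : G.Adj (w 0) (w l) := by
        rw [← hl, hwk0] at this
        exact this.symm
      have : w (k-1) = w l := by rw [hl]; norm_num
      rw [this]
      exact ⟨hadj0, hwA l⟩
    · intro h
      have := hinj 1 (k-1) (by omega) (by omega) h
      omega
  -- the cycle and its subsets
  set D : Set V := w '' (Set.Iio k) with hD
  set T0 : Set V := w '' ((fun t => 2*t) '' (Set.Iio (k/2))) with hT0
  set T1 : Set V := w '' (((fun t => 3*t) '' (Set.Iio (k/3))) ∪ ((fun t => 3*t+1) '' (Set.Iio (k/3)))) with hT1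
  have hT0idx : ((fun t => 2*t) '' (Set.Iio (k/2))) ⊆ Set.Iio k := by
    rintro x ⟨t, ht, rfl⟩
    simp only [Set.mem_Iio] at *
    omega
  have hT1idx : (((fun t => 3*t) '' (Set.Iio (k/3))) ∪ ((fun t => 3*t+1) '' (Set.Iio (k/3)))) ⊆ Set.Iio k := by
    rintro x (⟨t, ht, rfl⟩ | ⟨t, ht, rfl⟩) <;> simp only [Set.mem_Iio] at * <;> omega
  have hT0D : T0 ⊆ D := Set.image_mono hT0idx
  have hT1D : T1 ⊆ D := Set.image_mono hT1idx
  have hDA : D ⊆ A := by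
    rintro x ⟨j, hj, rfl⟩
    exact hwA j
  have hDne : D.Nonempty := ⟨w 0, 0, by simp [Set.mem_Iio]; omega, rfl⟩
  -- membership characterizations
  have hT0memI : ∀ j, j < k → w j ∈ T0 → ∃ t, t < k/2 ∧ j = 2*t := by
    intro j hj hmem
    rw [hT0] at hmem
    simp only [Set.mem_image, Set.mem_Iio] at hmem
    obtain ⟨x, ⟨t, ht, rfl⟩, he⟩ := hmem
    exact ⟨t, ht, (hinj _ j (by omega) hj he).symm⟩
  have hT1memI : ∀ j, j < k → w j ∈ T1 → ∃ t, t < k/3 ∧ (j = 3*t ∨ j = 3*t+1) := by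
    intro j hj hmem
    rw [hT1] at hmem
    simp only [Set.mem_image, Set.mem_union, Set.mem_Iio] at hmem
    obtain ⟨x, hx, he⟩ := hmem
    rcases hx with ⟨t, ht, rfl⟩ | ⟨t, ht, rfl⟩
    · exact ⟨t, ht, Or.inl (hinj _ j (by omega) hj he).symm⟩
    · exact ⟨t, ht, Or.inr (hinj _ j (by omega) hj he).symm⟩
  have hmemD : ∀ j, j < k → w j ∈ D := by
    intro j hj
    exact ⟨j, by simpa [Set.mem_Iio] using hj, rfl⟩
  -- neighborhoods lie in D
  have hnbD : ∀ j, j < k → G.neighborSet (w j) ∩ A ⊆ D := by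
    intro j hj
    rcases Nat.eq_zero_or_pos j with rfl | hjpos
    · rw [hchar0]
      rintro x (rfl | rfl)
      · exact hmemD 1 (by omega)
      · exact hmemD (k-1) (by omega)
    · obtain ⟨m, rfl⟩ : ∃ m, j = m + 1 := ⟨j - 1, by omega⟩
      rw [hchar m]
      rintro x (rfl | rfl)
      · exact hmemD m (by omega)
      · rcases Nat.lt_or_ge (m+2) k with h | h
        · exact hmemD (m+2) h
        · have : m + 2 = k := by omega
          rw [this, hwk0]
          exact hmemD 0 (by omega)
  have hinjOn : Set.InjOn w (Set.Iio k) := by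
    intro a ha b hb h
    exact hinj a b (Set.mem_Iio.mp ha) (Set.mem_Iio.mp hb) h
  have htwo : Function.Injective (fun t : ℕ => 2*t) := by
    intro a b h
    simp only at h
    omega
  have hthree : Function.Injective (fun t : ℕ => 3*t) := by
    intro a b h
    simp only at h
    omega
  have hthree1 : Function.Injective (fun t : ℕ => 3*t+1) := by
    intro a b h
    simp only at h
    omega
  have hDcard : D.ncard = k := by
    rw [hD, Set.ncard_image_of_injOn hinjOn, ncard_Iio]
  have hT0card : T0.ncard = k/2 := by
    rw [hT0, Set.ncard_image_of_injOn (hinjOn.mono hT0idx),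
      Set.ncard_image_of_injective _ htwo, ncard_Iio]
  have hdisj13 : Disjoint ((fun t : ℕ => 3*t) '' (Set.Iio (k/3)))
      ((fun t : ℕ => 3*t+1) '' (Set.Iio (k/3))) := by
    rw [Set.disjoint_left]
    rintro x hx1 hx2
    simp only [Set.mem_image, Set.mem_Iio] at hx1 hx2
    obtain ⟨t, _, rfl⟩ := hx1
    obtain ⟨s, _, hs⟩ := hx2
    omega
  have hT1card : T1.ncard = k/3 + k/3 := by
    rw [hT1, Set.ncard_image_of_injOn (hinjOn.mono hT1idx),
      Set.ncard_union_eq hdisj13 ((Set.finite_Iio _).image _) ((Set.finite_Iio _).image _),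
      Set.ncard_image_of_injective _ hthree, Set.ncard_image_of_injective _ hthree1, ncard_Iio]
  have hT0pos : ∀ t, t < k/2 → w (2*t) ∈ T0 := by
    intro t ht
    rw [hT0]
    exact Set.mem_image_of_mem w ⟨t, Set.mem_Iio.mpr ht, rfl⟩
  have hT1pos : ∀ t, t < k/3 → w (3*t) ∈ T1 ∧ w (3*t+1) ∈ T1 := by
    intro t ht
    constructor
    · rw [hT1]
      exact Set.mem_image_of_mem w (Set.mem_union_left _ ⟨t, Set.mem_Iio.mpr ht, rfl⟩)
    · rw [hT1]
      exact Set.mem_image_of_mem w (Set.mem_union_right _ ⟨t, Set.mem_Iio.mpr ht, rfl⟩)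
  -- the regularity facts
  have r2 : RegS G 2 D := by
    intro x hx
    rw [hD] at hx
    simp only [Set.mem_image, Set.mem_Iio] at hx
    obtain ⟨j, hj, rfl⟩ := hx
    rcases Nat.eq_zero_or_pos j with rfl | hjpos
    · have hsub := hnbD 0 (by omega)
      rw [hchar0] at hsub
      have hne : w 1 ≠ w (k-1) := by
        intro h
        have := hinj 1 (k-1) (by omega) (by omega) h
        omega
      rw [nbr_eval G hDA hchar0, Set.inter_eq_left.mpr hsub, Set.ncard_pair hne]
    · obtain ⟨m, rfl⟩ : ∃ m, j = m + 1 := ⟨j - 1, by omega⟩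
      have hsub := hnbD (m+1) hj
      rw [hchar m] at hsub
      rw [nbr_eval G hDA (hchar m), Set.inter_eq_left.mpr hsub,
        Set.ncard_pair (Ne.symm (hback m))]
  have hT0A : T0 ⊆ A := hT0D.trans hDA
  have hT1A : T1 ⊆ A := hT1D.trans hDA
  have r0 : RegS G 0 T0 := by
    intro x hx
    have hxD := hT0D hx
    rw [hD] at hxD
    simp only [Set.mem_image, Set.mem_Iio] at hxD
    obtain ⟨j, hj, rfl⟩ := hxD
    obtain ⟨t, ht, rfl⟩ := hT0memI j hj hx
    rcases Nat.eq_zero_or_pos t with rfl | htpos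
    · rw [Nat.mul_zero, nbr_eval G hT0A hchar0, pinter_none ?_ ?_, Set.ncard_empty]
      · intro hmem
        obtain ⟨s, hs, he⟩ := hT0memI 1 (by omega) hmem
        omega
      · intro hmem
        obtain ⟨s, hs, he⟩ := hT0memI (k-1) (by omega) hmem
        omega
    · obtain ⟨m, hm⟩ : ∃ m, 2*t = m + 1 := ⟨2*t - 1, by omega⟩
      rw [hm, nbr_eval G hT0A (hchar m), pinter_none ?_ ?_, Set.ncard_empty]
      · intro hmem
        obtain ⟨s, hs, he⟩ := hT0memI m (by omega) hmem
        omega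
      · intro hmem
        obtain ⟨s, hs, he⟩ := hT0memI (m+2) (by omega) hmem
        omega
  have r1 : RegS G 1 T1 := by
    intro x hx
    have hxD := hT1D hx
    rw [hD] at hxD
    simp only [Set.mem_image, Set.mem_Iio] at hxD
    obtain ⟨j, hj, rfl⟩ := hxD
    obtain ⟨t, ht, hform⟩ := hT1memI j hj hx
    rcases hform with rfl | rfl
    · rcases Nat.eq_zero_or_pos t with rfl | htpos
      · rw [Nat.mul_zero, nbr_eval G hT1A hchar0, pinter_left ?_ ?_, Set.ncard_singleton]
        · exact (hT1pos 0 (by omega)).2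
        · intro hmem
          obtain ⟨s, hs, he⟩ := hT1memI (k-1) (by omega) hmem
          omega
      · obtain ⟨m, hm⟩ : ∃ m, 3*t = m + 1 := ⟨3*t - 1, by omega⟩
        rw [hm, nbr_eval G hT1A (hchar m), pinter_right ?_ ?_, Set.ncard_singleton]
        · intro hmem
          obtain ⟨s, hs, he⟩ := hT1memI m (by omega) hmem
          omega
        · have h2 : m + 2 = 3*t + 1 := by omega
          rw [h2]
          exact (hT1pos t ht).2
    · rw [nbr_eval G hT1A (hchar (3*t)), pinter_left ?_ ?_, Set.ncard_singleton]
      · exact (hT1pos t ht).1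
      · intro hmem
        obtain ⟨s, hs, he⟩ := hT1memI (3*t+2) (by omega) hmem
        omega
  have hnb : ∀ x, x ∈ T0 ∪ T1 ∪ D → G.neighborSet x ∩ A ⊆ D := by
    intro x hx
    have hxD : x ∈ D := by
      rcases hx with (hx | hx) | hx
      · exact hT0D hx
      · exact hT1D hx
      · exact hx
    rw [hD] at hxD
    simp only [Set.mem_image, Set.mem_Iio] at hxD
    obtain ⟨j, hj, rfl⟩ := hxD
    exact hnbD j hj
  refine surgery G hDA hT0D hT1D (Set.Subset.refl D) hnb r0 r1 r2 ?_ (prev D hDA hDne)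
  rw [hDcard, hT0card, hT1card]
  omega

end CaseBMain

section KeyMain
variable {V : Type} [Finite V] (G : SimpleGraph V)

lemma key (hdeg : ∀ v, (G.neighborSet v).ncard ≤ 2) : ∀ A : Set V, KeyP G A := by
  intro A
  generalize hA : A.ncard = n
  induction n using Nat.strong_induction_on generalizing A with
  | _ n ih =>
  subst hA
  have prev : ∀ D : Set V, D ⊆ A → D.Nonempty → KeyP G (A \ D) := by
    intro D hDA hDne
    refine ih _ ?_ _ rfl
    have h1 : 0 < D.ncard := (Set.ncard_pos (Set.toFinite D)).mpr hDne
    have h2 : D.ncard ≤ A.ncard := Set.ncard_le_ncard hDA (Set.toFinite A)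
    rw [Set.ncard_diff hDA (Set.toFinite _)]
    omega
  rcases Set.eq_empty_or_nonempty A with rfl | hAne
  · exact ⟨∅, ∅, ∅, Set.Subset.refl _, Set.Subset.refl _, Set.Subset.refl _,
      regS_empty G 0, regS_empty G 1, regS_empty G 2, by simp⟩
  by_cases hc : ∃ v ∈ A, (G.neighborSet v ∩ A).ncard ≤ 1
  · obtain ⟨v, hv, h1⟩ := hc
    exact caseA G hdeg hv h1 prev
  · push_neg at hc
    have hB : ∀ v ∈ A, (G.neighborSet v ∩ A).ncard = 2 :=
      fun v hv => le_antisymm (nbrA_le G hdeg A v) (hc v hv)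
    exact caseB G hdeg hAne hB prev

end KeyMain

/-- A graph is regular if all its vertices have the same degree. -/
def IsRegularGraph {V : Type*} (G : SimpleGraph V) : Prop :=
  ∃ r : ℕ, ∀ v, ndeg G v = r

lemma ndeg_induce_s11 {V : Type} (G : SimpleGraph V) (S : Set V) (v : ↥S) :
    ndeg (G.induce S) v = (G.neighborSet ↑v ∩ S).ncard := by
  rw [ndeg, ← Set.ncard_image_of_injective _ (Subtype.val_injective (p := (· ∈ S)))]
  congr 1
  ext z
  constructor
  · rintro ⟨u, hu, rfl⟩
    have : G.Adj ↑v ↑u := by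
      simpa using hu
    exact ⟨this, u.2⟩
  · rintro ⟨hadj, hz⟩
    exact ⟨⟨z, hz⟩, by simpa using hadj, rfl⟩

/-- Every graph with maximum degree at most `2` and more than `11(k-1)/5` vertices has a
regular induced subgraph with at least `k` vertices, i.e. `f(k,2) ≤ 11(k-1)/5`. -/
theorem stmt_11 (k : ℕ) (hk : 1 ≤ k) (V : Type) [Finite V] (G : SimpleGraph V)
    (hdeg : ∀ v, ndeg G v ≤ 2) (hn : 11 * (k - 1) < 5 * Nat.card V) :
    ∃ s : Set V, k ≤ s.ncard ∧ IsRegularGraph (G.induce s) := by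
  have hdeg' : ∀ v, (G.neighborSet v).ncard ≤ 2 := hdeg
  obtain ⟨S0, S1, S2, h0, h1, h2, q0, q1, q2, hq⟩ := key G hdeg' Set.univ
  rw [Set.ncard_univ] at hq
  have hmax : k ≤ S0.ncard ∨ k ≤ S1.ncard ∨ k ≤ S2.ncard := by omega
  have build : ∀ (S : Set V) (r : ℕ), RegS G r S → k ≤ S.ncard →
      ∃ s : Set V, k ≤ s.ncard ∧ IsRegularGraph (G.induce s) := by
    intro S r hreg hcard
    refine ⟨S, hcard, r, ?_⟩
    intro v
    rw [ndeg_induce_s11 G S v]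
    exact hreg ↑v v.2
  rcases hmax with h | h | h
  · exact build S0 0 q0 h
  · exact build S1 1 q1 h
  · exact build S2 2 q2 h
end
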